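/- Let F be a field, V an F-vector space, n a natural number, f a finitely supported function from exponent vectors in ℕ^n to V, and w ∈ ℕ^n a weight assignment with weight w(e) = ∑_i eᵢ·wᵢ on exponent vectors. Suppose B is a finite set of exponent vectors contained in the support of f such that: (i) the weights w(m) for m ∈ B are pairwise distinct; (ii) {f(m) : m ∈ B} is linearly independent over F and spans the F-linear span of all values of f; and (iii) for every m in the support of f with m ∉ B, f(m) lies in the F-span of {f(m′) : m′ ∈ B, w(m′) < w(m)}. Then for every finite set B′ of exponent vectors with B′ ≠ B such that {f(m) : m ∈ B′} is linearly independent and spans the F-linear span of all values of f, one has ∑_{m∈B} w(m) < ∑_{m∈B′} w(m); in particular, B is the unique basis of f of minimum total weight. -/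

import Mathlib

set_option maxHeartbeats 1000000

open Cardinal in
private lemma card_le_of_span {F V : Type*} [Field F] [AddCommGroup V] [Module F V]
    {α : Type*} (f : α → V) (s' s : Finset α)
    (hind : LinearIndependent F (fun m : s' => f m))
    (hsub : f '' ↑s' ⊆ (Submodule.span F (f '' ↑s) : Set V)) :
    s'.card ≤ s.card := by
  classical
  have e : f '' ↑s = ((s.image f : Finset V) : Set V) := (Finset.coe_image).symm
  rw [e] at hsub
  have h1 : Set.range (fun m : s' => f m) ≤ (Submodule.span F ((s.image f : Finset V) : Set V) : Set V) := by
    rintro _ ⟨m, rfl⟩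
    exact hsub ⟨m.1, m.2, rfl⟩
  have h2 := linearIndependent_le_span' (R := F) (fun m : s' => f m) hind _ h1
  rw [Cardinal.mk_coe_finset] at h2
  have h3 : s'.card ≤ Fintype.card ((s.image f : Finset V) : Set V) := by exact_mod_cast h2
  have h4 : Fintype.card (((s.image f : Finset V) : Set V) : Type _) = (s.image f).card := by simp
  exact le_trans (h4 ▸ h3) Finset.card_image_le

/-- **Uniqueness of the least basis under a basis isolating weight assignment.**
If `w` is a basis isolating weight assignment for `f` (witnessed by the basis
`B`), then every other basis `B'` of the coefficient span of `f` has strictly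
larger total weight; in particular `B` is the unique minimum-weight basis. -/
theorem basis_isolating_least_basis_unique
    (F : Type*) [Field F] (V : Type*) [AddCommGroup V] [Module F V]
    (n : ℕ) (f : (Fin n → ℕ) →₀ V) (w : Fin n → ℕ)
    (B : Finset (Fin n → ℕ)) (hBsupp : B ⊆ f.support)
    (hdist : ∀ m ∈ B, ∀ m' ∈ B, (∑ i, m i * w i) = (∑ i, m' i * w i) → m = m')
    (hind : LinearIndependent F (fun m : B => f m))
    (hspan : Submodule.span F (⇑f '' ↑B) = Submodule.span F (Set.range ⇑f))
    (hiso : ∀ m ∈ f.support, m ∉ B →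
      f m ∈ Submodule.span F
        (⇑f '' {m' | m' ∈ B ∧ (∑ i, m' i * w i) < (∑ i, m i * w i)})) :
    ∀ B' : Finset (Fin n → ℕ), B' ≠ B →
      LinearIndependent F (fun m : B' => f m) →
      Submodule.span F (⇑f '' ↑B') = Submodule.span F (Set.range ⇑f) →
      (∑ m ∈ B, ∑ i, m i * w i) < ∑ m ∈ B', ∑ i, m i * w i := by
  classical
  intro B' hne hind' hspan'
  set W : (Fin n → ℕ) → ℕ := fun m => ∑ i, m i * w i with hWdef
  -- every element of B' is in the support of f
  have hB'supp : ∀ m ∈ B', m ∈ f.support := by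
    intro m hm
    exact Finsupp.mem_support_iff.mpr (hind'.ne_zero ⟨m, hm⟩)
  -- restriction of an independent family to a subset remains independent
  have subInd : ∀ (S s : Finset (Fin n → ℕ)), s ⊆ S →
      LinearIndependent F (fun m : S => f m) →
      LinearIndependent F (fun m : s => f m) := by
    intro S s hs h
    refine h.comp (fun (m : {x // x ∈ s}) => (⟨m.1, hs m.2⟩ : {x // x ∈ S})) ?_
    intro a b hab
    apply Subtype.ext
    simpa using congrArg Subtype.val hab
  -- key consequence of isolation: every support element is spanned by
  -- basis elements of no larger weight
  have lemB : ∀ m ∈ f.support,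
      f m ∈ Submodule.span F (⇑f '' {b | b ∈ B ∧ W b ≤ W m}) := by
    intro m hm
    by_cases hmB : m ∈ B
    · exact Submodule.subset_span ⟨m, ⟨hmB, le_rfl⟩, rfl⟩
    · refine Submodule.span_mono (Set.image_mono ?_) (hiso m hm hmB)
      exact fun b hb => ⟨hb.1, le_of_lt hb.2⟩
  have spanB : ∀ (t : ℕ) (m : Fin n → ℕ), m ∈ f.support → W m ≤ t →
      f m ∈ Submodule.span F (⇑f '' ↑(B.filter (fun b => W b ≤ t))) := by
    intro t m hm hmt
    refine Submodule.span_mono (Set.image_mono ?_) (lemB m hm)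
    intro b hb
    simp only [Finset.coe_filter, Set.mem_setOf_eq]
    exact ⟨hb.1, le_trans hb.2 hmt⟩
  -- threshold counting inequality
  have countLe : ∀ t : ℕ,
      (B'.filter (fun m => W m ≤ t)).card ≤ (B.filter (fun m => W m ≤ t)).card := by
    intro t
    refine card_le_of_span (F := F) f _ _
      (subInd B' _ (Finset.filter_subset _ _) hind') ?_
    rintro _ ⟨m, hm, rfl⟩
    have hm' := Finset.mem_filter.mp (Finset.mem_coe.mp hm)
    exact spanB t m (hB'supp m hm'.1) hm'.2
  -- |B| ≤ |B'|
  have cardBB' : B.card ≤ B'.card := by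
    refine card_le_of_span (F := F) f B B' hind ?_
    rw [hspan']
    rintro _ ⟨m, _, rfl⟩
    exact Submodule.subset_span ⟨m, rfl⟩
  -- a bound on all weights involved
  set t₀ : ℕ := (B ∪ B').sup W with ht₀
  set N : ℕ := t₀ + 1 with hN
  have hBfull : B.filter (fun m => W m ≤ t₀) = B :=
    Finset.filter_true_of_mem (fun m hm => Finset.le_sup (Finset.mem_union_left _ hm))
  have hB'full : B'.filter (fun m => W m ≤ t₀) = B' :=
    Finset.filter_true_of_mem (fun m hm => Finset.le_sup (Finset.mem_union_right _ hm))
  have cardEq : B'.card = B.card := by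
    have := countLe t₀
    rw [hBfull, hB'full] at this
    exact le_antisymm this cardBB'
  -- sum over a finset of weights as a sum over thresholds
  have sumFormula : ∀ S : Finset (Fin n → ℕ), (∀ m ∈ S, W m < N) →
      ∑ m ∈ S, W m = ∑ t ∈ Finset.range N, (S.filter (fun m => t < W m)).card := by
    intro S hS
    calc ∑ m ∈ S, W m
        = ∑ m ∈ S, ∑ t ∈ Finset.range N, if t < W m then 1 else 0 := by
          refine Finset.sum_congr rfl fun m hm => ?_
          rw [← Finset.card_filter]
          have e1 : (Finset.range N).filter (fun t => t < W m) = Finset.range (W m) := by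
            ext t
            simp only [Finset.mem_filter, Finset.mem_range]
            constructor
            · exact fun h => h.2
            · exact fun h => ⟨lt_trans h (hS m hm), h⟩
          rw [e1, Finset.card_range]
      _ = ∑ t ∈ Finset.range N, (S.filter (fun m => t < W m)).card := by
          rw [Finset.sum_comm]
          exact Finset.sum_congr rfl fun t _ => (Finset.card_filter _ _).symm
  have hsplit : ∀ (S : Finset (Fin n → ℕ)) (t : ℕ),
      (S.filter (fun m => W m ≤ t)).card + (S.filter (fun m => t < W m)).card = S.card := by
    intro S t
    have e1 : S.filter (fun m => t < W m) = S.filter (fun m => ¬ W m ≤ t) := by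
      apply Finset.filter_congr
      intro m _
      simp [not_le]
    rw [e1]
    exact Finset.card_filter_add_card_filter_not _
  have hab : ∀ t : ℕ,
      (B.filter (fun m => t < W m)).card ≤ (B'.filter (fun m => t < W m)).card := by
    intro t
    have h1 := countLe t
    have h2 := hsplit B t
    have h3 := hsplit B' t
    omega
  have hWB : ∀ m ∈ B, W m < N := fun m hm =>
    Nat.lt_succ_of_le (Finset.le_sup (Finset.mem_union_left _ hm))
  have hWB' : ∀ m ∈ B', W m < N := fun m hm =>
    Nat.lt_succ_of_le (Finset.le_sup (Finset.mem_union_right _ hm))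
  -- main argument
  by_contra hcon
  push_neg at hcon
  have hcon' : ∑ m ∈ B', W m ≤ ∑ m ∈ B, W m := hcon
  have hsB := sumFormula B hWB
  have hsB' := sumFormula B' hWB'
  -- all threshold counts must be equal
  have haeq : ∀ t ∈ Finset.range N,
      (B.filter (fun m => t < W m)).card = (B'.filter (fun m => t < W m)).card := by
    by_contra hc
    push_neg at hc
    obtain ⟨t, ht, hne'⟩ := hc
    have hstrict : (∑ t ∈ Finset.range N, (B.filter (fun m => t < W m)).card)
        < ∑ t ∈ Finset.range N, (B'.filter (fun m => t < W m)).card :=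
      Finset.sum_lt_sum (fun i _ => hab i) ⟨t, ht, lt_of_le_of_ne (hab t) hne'⟩
    omega
  have countEq : ∀ t, t < N →
      (B'.filter (fun m => W m ≤ t)).card = (B.filter (fun m => W m ≤ t)).card := by
    intro t ht
    have h1 := haeq t (Finset.mem_range.mpr ht)
    have h2 := hsplit B t
    have h3 := hsplit B' t
    omega
  have countEqLt : ∀ t, t ≤ N →
      (B'.filter (fun m => W m < t)).card = (B.filter (fun m => W m < t)).card := by
    intro t ht
    match t with
    | 0 => simp
    | (s+1) =>
      have h1 := countEq s (by omega)
      have e1 : B'.filter (fun m => W m < s + 1) = B'.filter (fun m => W m ≤ s) := by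
        apply Finset.filter_congr; intro m _; simp [Nat.lt_succ_iff]
      have e2 : B.filter (fun m => W m < s + 1) = B.filter (fun m => W m ≤ s) := by
        apply Finset.filter_congr; intro m _; simp [Nat.lt_succ_iff]
      rw [e1, e2, h1]
  -- equality of counts forces B' = B
  have hBB : B' = B := by
    refine Finset.eq_of_subset_of_card_le ?_ (le_of_eq cardEq.symm)
    intro m hm
    by_contra hmB
    have msupp : m ∈ f.support := hB'supp m hm
    have hmN : W m < N := hWB' m hm
    set D : Finset (Fin n → ℕ) := B.filter (fun b => W b < W m) with hD
    set D' : Finset (Fin n → ℕ) := B'.filter (fun b => W b < W m) with hD'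
    have hDD' : D'.card = D.card := countEqLt (W m) (le_of_lt hmN)
    have hmD' : m ∉ D' := by
      intro h
      exact lt_irrefl (W m) (Finset.mem_filter.mp h).2
    have hins : insert m D' ⊆ B' :=
      Finset.insert_subset hm (Finset.filter_subset _ _)
    have hindins : LinearIndependent F (fun x : (insert m D' : Finset (Fin n → ℕ)) => f x) :=
      subInd B' _ hins hind'
    have hsub : ⇑f '' ↑(insert m D') ⊆ (Submodule.span F (⇑f '' ↑D) : Set V) := by
      rintro _ ⟨x, hx, rfl⟩
      rw [Finset.coe_insert] at hx
      rcases hx with hx | hx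
      · subst hx
        have hset : {m' | m' ∈ B ∧ W m' < W x} = (↑D : Set (Fin n → ℕ)) := by
          ext b
          simp [hD]
        have := hiso x msupp hmB
        rw [hset] at this
        exact this
      · have hx' := Finset.mem_filter.mp (Finset.mem_coe.mp hx)
        refine Submodule.span_mono (Set.image_mono ?_) (lemB x (hB'supp x hx'.1))
        intro b hb
        simp only [Finset.coe_filter, Set.mem_setOf_eq, hD]
        exact ⟨hb.1, lt_of_le_of_lt hb.2 hx'.2⟩
    have hcard := card_le_of_span (F := F) f (insert m D') D hindins hsub
    rw [Finset.card_insert_of_notMem hmD'] at hcard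
    omega
  exact hne hBB
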